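/- For any integer n ≥ 3, let G be an edge-colored complete 3-partite 3-uniform hypergraph K^{(3)}_{n,n,n} with partite sets V_1, V_2, V_3 that is rainbow 𝒯-free and uses at least 3 colors, say |C(G)| = k ≥ 3. Then at least one of the following holds: (i) some partite set V_ℓ can be partitioned into k parts V_{ℓ,1}, V_{ℓ,2}, ..., V_{ℓ,k} such that for each i ∈ {1,...,k}, every edge containing a vertex of V_{ℓ,i} has color i; (ii) after renumbering the colors as 1,...,k, for every ℓ ∈ {1,2,3} the set V_ℓ can be partitioned into k−1 parts V_{ℓ,2}, V_{ℓ,3}, ..., V_{ℓ,k} such that for every i ∈ {2,...,k} every edge contained in V_{1,i} ∪ V_{2,i} ∪ V_{3,i} has color 1 or i, and every other edge has color 1. -/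

import Mathlib

/-- An edge of the complete 3-partite 3-graph `K^{(3)}_{n,n,n}` (with partite sets
`V_ℓ = {ℓ} × Fin n` for `ℓ : Fin 3`): a 3-set with exactly one vertex in each partite set. -/
def IsTriEdge {n : ℕ} (e : Finset (Fin 3 × Fin n)) : Prop :=
  e.card = 3 ∧ e.image Prod.fst = Finset.univ

/-- The set of colors appearing on the edges of an edge-colored `K^{(3)}_{n,n,n}`. -/
def triColorFinset {n : ℕ} (c : Finset (Fin 3 × Fin n) → ℕ) : Finset ℕ :=
  ((Finset.univ : Finset (Finset (Fin 3 × Fin n))).filter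
    (fun e => e.card = 3 ∧ e.image Prod.fst = Finset.univ)).image c

/-- There is a rainbow tight path `𝒯` (edges `v₁v₂v₃, v₂v₃v₄, v₃v₄v₅`) in the
edge-colored `K^{(3)}_{n,n,n}`. -/
def HasRainbowTightTri {n : ℕ} (c : Finset (Fin 3 × Fin n) → ℕ) : Prop :=
  ∃ v : Fin 5 → Fin 3 × Fin n, Function.Injective v ∧
    IsTriEdge {v 0, v 1, v 2} ∧ IsTriEdge {v 1, v 2, v 3} ∧ IsTriEdge {v 2, v 3, v 4} ∧
    c {v 0, v 1, v 2} ≠ c {v 1, v 2, v 3} ∧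
    c {v 0, v 1, v 2} ≠ c {v 2, v 3, v 4} ∧
    c {v 1, v 2, v 3} ≠ c {v 2, v 3, v 4}

open Finset

def PD (a b c : ℕ) : Prop := a ≠ b ∧ a ≠ c ∧ b ≠ c

lemma PD_resolve {a b c : ℕ} (h : ¬ PD a b c) (hab : a ≠ b) : c = a ∨ c = b := by
  unfold PD at h
  push_neg at h
  by_cases h1 : a = c
  · exact Or.inl h1.symm
  · exact Or.inr (h hab h1).symm

lemma lemA {n : ℕ} (f : Fin n → Fin n → ℕ)
    (hA : ∀ x x' y y', x ≠ x' → y ≠ y' → ¬ PD (f x y) (f x' y) (f x' y'))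
    (hB : ∀ x x' y y', x ≠ x' → y ≠ y' → ¬ PD (f x y) (f x y') (f x' y'))
    (h3 : ∃ a b g : Fin n × Fin n, PD (f a.1 a.2) (f b.1 b.2) (f g.1 g.2)) :
    (∀ x y y', f x y = f x y') ∨ (∀ x x' y, f x y = f x' y) := by
  by_cases hrow : ∀ x y y', f x y = f x y'
  · exact Or.inl hrow
  push_neg at hrow
  obtain ⟨x0, y1, y2, hab⟩ := hrow
  right
  by_cases h3r : ∃ x ya yb yc, PD (f x ya) (f x yb) (f x yc)
  · obtain ⟨xs, ya, yb, yc, hPD⟩ := h3r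
    obtain ⟨h1, h2, h3'⟩ := hPD
    have hya : ya ≠ yb := fun h => h1 (by rw [h])
    have hyb : ya ≠ yc := fun h => h2 (by rw [h])
    have hyc : yb ≠ yc := fun h => h3' (by rw [h])
    have main : ∀ x y, f x y = f xs y := by
      intro x y
      rcases eq_or_ne x xs with rfl | hx
      · rfl
      have hva : f x ya = f xs ya := by
        rcases PD_resolve (hB xs x yb ya hx.symm hya.symm) (Ne.symm h1) with h | h
        · rcases PD_resolve (hB xs x yc ya hx.symm hyb.symm) (Ne.symm h2) with h' | h'
          · exact absurd (h.symm.trans h') h3'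
          · exact h'
        · exact h
      have hvb : f x yb = f xs yb := by
        rcases PD_resolve (hB xs x ya yb hx.symm hya) h1 with h | h
        · rcases PD_resolve (hB xs x yc yb hx.symm hyc.symm) (Ne.symm h3') with h' | h'
          · exact absurd (h'.symm.trans h) (Ne.symm h2)
          · exact h'
        · exact h
      have hvc : f x yc = f xs yc := by
        rcases PD_resolve (hB xs x ya yc hx.symm hyb) h2 with h | h
        · rcases PD_resolve (hB xs x yb yc hx.symm hyc) h3' with h' | h'
          · exact absurd (h'.symm.trans h) (Ne.symm h1)
          · exact h'
        · exact h
      rcases eq_or_ne y ya with rfl | hy1; · exact hva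
      rcases eq_or_ne y yb with rfl | hy2; · exact hvb
      rcases eq_or_ne y yc with rfl | hy3; · exact hvc
      by_contra hne
      have hne' : f xs y ≠ f x y := fun h => hne h.symm
      have g1 := PD_resolve (hA xs x y ya hx.symm hy1) hne'
      have g2 := PD_resolve (hA xs x y yb hx.symm hy2) hne'
      have g3 := PD_resolve (hA xs x y yc hx.symm hy3) hne'
      rw [hva] at g1; rw [hvb] at g2; rw [hvc] at g3
      rcases g1 with h1' | h1' <;> rcases g2 with h2' | h2' <;> rcases g3 with h3'' | h3''
      · exact h1 (h1'.trans h2'.symm)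
      · exact h1 (h1'.trans h2'.symm)
      · exact h2 (h1'.trans h3''.symm)
      · exact h3' (h2'.trans h3''.symm)
      · exact h3' (h2'.trans h3''.symm)
      · exact h2 (h1'.trans h3''.symm)
      · exact h1 (h1'.trans h2'.symm)
      · exact h1 (h1'.trans h2'.symm)
    exact fun x x' y => (main x y).trans (main x' y).symm
  · exfalso
    push_neg at h3r
    obtain ⟨a, b, g, hPD⟩ := h3
    have hy12 : y1 ≠ y2 := by rintro rfl; exact hab rfl
    -- find an entry with value outside {f x0 y1, f x0 y2}
    have hexg : ∃ x1 y3, f x1 y3 ≠ f x0 y1 ∧ f x1 y3 ≠ f x0 y2 := by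
      by_contra hno
      push_neg at hno
      obtain ⟨p1, p2, p3⟩ := hPD
      have q1 := hno a.1 a.2
      have q2 := hno b.1 b.2
      have q3 := hno g.1 g.2
      by_cases e1 : f a.1 a.2 = f x0 y1 <;> by_cases e2 : f b.1 b.2 = f x0 y1 <;>
        by_cases e3 : f g.1 g.2 = f x0 y1
      · exact p1 (e1.trans e2.symm)
      · exact p1 (e1.trans e2.symm)
      · exact p2 (e1.trans e3.symm)
      · exact p3 ((q2 e2).trans (q3 e3).symm)
      · exact p3 (e2.trans e3.symm)
      · exact p2 ((q1 e1).trans (q3 e3).symm)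
      · exact p1 ((q1 e1).trans (q2 e2).symm)
      · exact p1 ((q1 e1).trans (q2 e2).symm)
    obtain ⟨x1, y3, hγa, hγb⟩ := hexg
    have hx10 : x1 ≠ x0 := by
      rintro rfl
      exact h3r x1 y1 y2 y3 ⟨hab, fun h => hγa h.symm, fun h => hγb h.symm⟩
    have h1 : f x1 y1 = f x0 y1 ∨ f x1 y1 = f x0 y2 := by
      rcases PD_resolve (hB x0 x1 y2 y1 hx10.symm hy12.symm) (Ne.symm hab) with h | h
      · exact Or.inr h
      · exact Or.inl h
    have h2 : f x1 y2 = f x0 y1 ∨ f x1 y2 = f x0 y2 :=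
      PD_resolve (hB x0 x1 y1 y2 hx10.symm hy12) hab
    have heq : f x1 y1 = f x1 y2 := by
      by_contra hne
      exact h3r x1 y1 y2 y3
        ⟨hne, by rcases h1 with h | h <;> rw [h] <;>
          [exact fun hh => hγa hh.symm; exact fun hh => hγb hh.symm],
         by rcases h2 with h | h <;> rw [h] <;>
          [exact fun hh => hγa hh.symm; exact fun hh => hγb hh.symm]⟩
    obtain ⟨y, hydiff, hyval, hyval0⟩ :
        ∃ y, f x0 y ≠ f x1 y ∧ (f x1 y = f x0 y1 ∨ f x1 y = f x0 y2) ∧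
          (f x0 y = f x0 y1 ∨ f x0 y = f x0 y2) := by
      by_cases hc : f x0 y1 = f x1 y1
      · exact ⟨y2, by rw [← heq, ← hc]; exact fun h => hab h.symm, h2, Or.inr rfl⟩
      · exact ⟨y1, hc, h1, Or.inl rfl⟩
    have hyy3 : y ≠ y3 := by
      rintro rfl
      rcases hyval with h | h
      · exact hγa h
      · exact hγb h
    refine hA x0 x1 y y3 hx10.symm hyy3 ⟨hydiff, ?_, ?_⟩
    · rcases hyval0 with h | h
      · exact fun hh => hγa ((hh.symm.trans h))
      · exact fun hh => hγb ((hh.symm.trans h))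
    · rcases hyval with h | h
      · exact fun hh => hγa ((hh.symm.trans h))
      · exact fun hh => hγb ((hh.symm.trans h))

/-- The six no-rainbow-tight-path conditions for the coordinate coloring `d`. -/
def NoR {n : ℕ} (d : Fin n → Fin n → Fin n → ℕ) : Prop :=
  (∀ x x' y y' z, x ≠ x' → y ≠ y' → ¬ PD (d x y z) (d x' y z) (d x' y' z)) ∧
  (∀ x x' y y' z, x ≠ x' → y ≠ y' → ¬ PD (d x y z) (d x y' z) (d x' y' z)) ∧
  (∀ x x' y z z', x ≠ x' → z ≠ z' → ¬ PD (d x y z) (d x' y z) (d x' y z')) ∧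
  (∀ x x' y z z', x ≠ x' → z ≠ z' → ¬ PD (d x y z) (d x y z') (d x' y z')) ∧
  (∀ x y y' z z', y ≠ y' → z ≠ z' → ¬ PD (d x y z) (d x y' z) (d x y' z')) ∧
  (∀ x y y' z z', y ≠ y' → z ≠ z' → ¬ PD (d x y z) (d x y z') (d x y' z'))

lemma NoR_cyc {n : ℕ} {d : Fin n → Fin n → Fin n → ℕ} (h : NoR d) :
    NoR (fun a b c => d c a b) := by
  obtain ⟨h1, h2, h3, h4, h5, h6⟩ := h
  refine ⟨?_, ?_, ?_, ?_, ?_, ?_⟩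
  · exact fun x x' y y' z hx hy => h5 z x x' y y' hx hy
  · exact fun x x' y y' z hx hy => h6 z x x' y y' hx hy
  · exact fun x x' y z z' hx hz => h2 z z' x x' y hz hx
  · exact fun x x' y z z' hx hz => h1 z z' x x' y hz hx
  · exact fun x y y' z z' hy hz => h4 z z' x y y' hz hy
  · exact fun x y y' z z' hy hz => h3 z z' x y y' hz hy

lemma key {n : ℕ} (d : Fin n → Fin n → Fin n → ℕ) (hN : NoR d) (z0 : Fin n)
    (h3 : ∃ a b g : Fin n × Fin n, PD (d a.1 a.2 z0) (d b.1 b.2 z0) (d g.1 g.2 z0)) :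
    (∀ x y z y' z', d x y z = d x y' z') ∨ (∀ x y z x' z', d x y z = d x' y z') := by
  obtain ⟨h1, h2, h3', h4, h5, h6⟩ := hN
  rcases lemA (fun x y => d x y z0)
      (fun x x' y y' hx hy => h1 x x' y y' z0 hx hy)
      (fun x x' y y' hx hy => h2 x x' y y' z0 hx hy) h3 with hr | hc
  · left
    obtain ⟨a, b, g, hPD⟩ := h3
    have main : ∀ y x z, d x y z = d x y z0 := by
      intro y
      rcases lemA (fun x z => d x y z)
          (fun x x' z z' hx hz => h3' x x' y z z' hx hz)
          (fun x x' z z' hx hz => h4 x x' y z z' hx hz)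
          ⟨(a.1, z0), (b.1, z0), (g.1, z0), by
            simpa only [hr a.1 y a.2, hr b.1 y b.2, hr g.1 y g.2] using hPD⟩ with hyr | hyc
      · exact fun x z => hyr x z z0
      · exfalso
        have e1 : d a.1 y z0 = d b.1 y z0 := hyc a.1 b.1 z0
        rw [hr a.1 y a.2, hr b.1 y b.2] at e1
        exact hPD.1 e1
    exact fun x y z y' z' => (main y x z).trans ((hr x y y').trans (main y' x z').symm)
  · right
    obtain ⟨a, b, g, hPD⟩ := h3
    have main : ∀ x y z, d x y z = d x y z0 := by
      intro x
      rcases lemA (fun y z => d x y z)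
          (fun y y' z z' hy hz => h5 x y y' z z' hy hz)
          (fun y y' z z' hy hz => h6 x y y' z z' hy hz)
          ⟨(a.2, z0), (b.2, z0), (g.2, z0), by
            simpa only [hc a.1 x a.2, hc b.1 x b.2, hc g.1 x g.2] using hPD⟩ with hyr | hyc
      · exact fun y z => hyr y z z0
      · exfalso
        have e1 : d x a.2 z0 = d x b.2 z0 := hyc a.2 b.2 z0
        rw [← hc a.1 x a.2, ← hc b.1 x b.2] at e1
        exact hPD.1 e1
    exact fun x y z x' z' => (main x y z).trans ((hc x x' y).trans (main x' y z').symm)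

lemma slice_inter {n : ℕ} (hn : 3 ≤ n) (D : Fin n → Fin n → Fin n → ℕ)
    (La Lb Lc : Fin n → Finset ℕ)
    (hmA : ∀ x y z, D x y z ∈ La x)
    (hmB : ∀ x y z, D x y z ∈ Lb y)
    (hmC : ∀ x y z, D x y z ∈ Lc z)
    (hb : ∀ y, (Lb y).card ≤ 2)
    (hc : ∀ z, (Lc z).card ≤ 2)
    (hcol : ∃ a b g : Fin n × Fin n × Fin n,
      PD (D a.1 a.2.1 a.2.2) (D b.1 b.2.1 b.2.2) (D g.1 g.2.1 g.2.2))
    (u v : Fin n) : (La u ∩ La v).Nonempty := by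
  by_contra hemp
  rw [Finset.not_nonempty_iff_eq_empty, ← Finset.disjoint_iff_inter_eq_empty] at hemp
  have hne : ∀ y z, D u y z ≠ D v y z := by
    intro y z h
    exact Finset.disjoint_left.mp hemp (hmA u y z) (h ▸ hmA v y z)
  have hLb : ∀ y z, Lb y = {D u y z, D v y z} := by
    intro y z
    refine (Finset.eq_of_subset_of_card_le ?_ ?_).symm
    · intro t ht
      rcases Finset.mem_insert.mp ht with rfl | ht
      · exact hmB u y z
      · rw [Finset.mem_singleton.mp ht]; exact hmB v y z
    · calc (Lb y).card ≤ 2 := hb y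
        _ = ({D u y z, D v y z} : Finset ℕ).card := (Finset.card_pair (hne y z)).symm
  have hLc : ∀ y z, Lc z = {D u y z, D v y z} := by
    intro y z
    refine (Finset.eq_of_subset_of_card_le ?_ ?_).symm
    · intro t ht
      rcases Finset.mem_insert.mp ht with rfl | ht
      · exact hmC u y z
      · rw [Finset.mem_singleton.mp ht]; exact hmC v y z
    · calc (Lc z).card ≤ 2 := hc z
        _ = _ := (Finset.card_pair (hne y z)).symm
  have i0 : Fin n := ⟨0, by omega⟩
  -- every color lies in the two-element set Lb i0
  have hall : ∀ x y z, D x y z ∈ Lb i0 := by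
    intro x y z
    have h1 : D x y z ∈ Lb y := hmB x y z
    rw [hLb y z, ← hLc y z, hLc i0 z, ← hLb i0 z] at h1
    exact h1
  obtain ⟨a, b, g, hPD⟩ := hcol
  have ha := hall a.1 a.2.1 a.2.2
  have hb' := hall b.1 b.2.1 b.2.2
  have hg := hall g.1 g.2.1 g.2.2
  rw [hLb i0 i0] at ha hb' hg
  simp only [Finset.mem_insert, Finset.mem_singleton] at ha hb' hg
  obtain ⟨p1, p2, p3⟩ := hPD
  rcases ha with h | h <;> rcases hb' with h' | h' <;> rcases hg with h'' | h''
  · exact p1 (h.trans h'.symm)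
  · exact p1 (h.trans h'.symm)
  · exact p2 (h.trans h''.symm)
  · exact p3 (h'.trans h''.symm)
  · exact p3 (h'.trans h''.symm)
  · exact p2 (h.trans h''.symm)
  · exact p1 (h.trans h'.symm)
  · exact p1 (h.trans h'.symm)

/-- The transversal edge `{(0,x),(1,y),(2,z)}`. -/
def triE {n : ℕ} (x y z : Fin n) : Finset (Fin 3 × Fin n) :=
  {((0 : Fin 3), x), ((1 : Fin 3), y), ((2 : Fin 3), z)}

lemma triEdge_mk {n : ℕ} (p q r : Fin 3) (hpq : p ≠ q) (hpr : p ≠ r) (hqr : q ≠ r)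
    (a b e : Fin n) : IsTriEdge ({(p, a), (q, b), (r, e)} : Finset (Fin 3 × Fin n)) := by
  have h1 : (p, a) ∉ ({(q, b), (r, e)} : Finset (Fin 3 × Fin n)) := by
    simp only [Finset.mem_insert, Finset.mem_singleton, Prod.mk.injEq, not_or]
    exact ⟨fun h => absurd h.1 hpq, fun h => absurd h.1 hpr⟩
  have h2 : (q, b) ∉ ({(r, e)} : Finset (Fin 3 × Fin n)) := by
    simp only [Finset.mem_singleton, Prod.mk.injEq]
    exact fun h => absurd h.1 hqr
  constructor
  · rw [Finset.card_insert_of_notMem h1, Finset.card_insert_of_notMem h2,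
      Finset.card_singleton]
  · apply Finset.eq_univ_of_card
    rw [Finset.image_insert, Finset.image_insert, Finset.image_singleton]
    have g1 : p ∉ ({q, r} : Finset (Fin 3)) := by
      simp only [Finset.mem_insert, Finset.mem_singleton]
      rintro (h | h); exacts [hpq h, hpr h]
    have g2 : q ∉ ({r} : Finset (Fin 3)) := by
      simp only [Finset.mem_singleton]; exact hqr
    rw [Finset.card_insert_of_notMem g1, Finset.card_insert_of_notMem g2,
      Finset.card_singleton]
    rfl

lemma isTriEdge_triE {n : ℕ} (x y z : Fin n) : IsTriEdge (triE x y z) :=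
  triEdge_mk 0 1 2 (by decide) (by decide) (by decide) x y z

lemma triE_decode {n : ℕ} {e : Finset (Fin 3 × Fin n)} (he : IsTriEdge e) :
    ∃ x y z, e = triE x y z := by
  obtain ⟨hcard, himg⟩ := he
  have h0 : (0 : Fin 3) ∈ e.image Prod.fst := by rw [himg]; exact Finset.mem_univ _
  have h1 : (1 : Fin 3) ∈ e.image Prod.fst := by rw [himg]; exact Finset.mem_univ _
  have h2 : (2 : Fin 3) ∈ e.image Prod.fst := by rw [himg]; exact Finset.mem_univ _
  rw [Finset.mem_image] at h0 h1 h2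
  obtain ⟨p0, hp0, hp0'⟩ := h0
  obtain ⟨p1, hp1, hp1'⟩ := h1
  obtain ⟨p2, hp2, hp2'⟩ := h2
  refine ⟨p0.2, p1.2, p2.2, ?_⟩
  have hp0e : p0 = ((0 : Fin 3), p0.2) := by rw [← hp0']
  have hp1e : p1 = ((1 : Fin 3), p1.2) := by rw [← hp1']
  have hp2e : p2 = ((2 : Fin 3), p2.2) := by rw [← hp2']
  have hsub : triE p0.2 p1.2 p2.2 ⊆ e := by
    intro t ht
    rcases Finset.mem_insert.mp ht with rfl | ht
    · rwa [← hp0e]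
    rcases Finset.mem_insert.mp ht with rfl | ht
    · rwa [← hp1e]
    · rw [Finset.mem_singleton.mp ht, ← hp2e]; exact hp2
  have hc3 : (triE p0.2 p1.2 p2.2).card = 3 := (isTriEdge_triE _ _ _).1
  exact (Finset.eq_of_subset_of_card_le hsub (by rw [hcard, hc3])).symm

lemma triColor_eq {n : ℕ} (c : Finset (Fin 3 × Fin n) → ℕ) :
    triColorFinset c =
      (Finset.univ : Finset (Fin n × Fin n × Fin n)).image
        (fun t => c (triE t.1 t.2.1 t.2.2)) := by
  ext t
  simp only [triColorFinset, Finset.mem_image, Finset.mem_filter, Finset.mem_univ,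
    true_and]
  constructor
  · rintro ⟨e, he, rfl⟩
    obtain ⟨x, y, z, rfl⟩ := triE_decode (he : IsTriEdge e)
    exact ⟨(x, y, z), rfl⟩
  · rintro ⟨⟨x, y, z⟩, rfl⟩
    exact ⟨triE x y z, isTriEdge_triE x y z, rfl⟩

lemma hfree_aux {n : ℕ} (c : Finset (Fin 3 × Fin n) → ℕ) (hfree : ¬ HasRainbowTightTri c)
    (p q r : Fin 3) (hpq : p ≠ q) (hpr : p ≠ r) (hqr : q ≠ r)
    (a a' b b' e : Fin n) (ha : a ≠ a') (hb : b ≠ b') :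
    ¬ PD (c {(p, a), (q, b), (r, e)}) (c {(q, b), (r, e), (p, a')})
      (c {(r, e), (p, a'), (q, b')}) := by
  intro hPD
  apply hfree
  refine ⟨![(p, a), (q, b), (r, e), (p, a'), (q, b')], ?_, ?_, ?_, ?_, ?_, ?_, ?_⟩
  · intro i j hij
    fin_cases i <;> fin_cases j <;> simp_all [Prod.ext_iff]
  · exact triEdge_mk p q r hpq hpr hqr a b e
  · exact triEdge_mk q r p hqr (Ne.symm hpq) (Ne.symm hpr) b e a'
  · exact triEdge_mk r p q (Ne.symm hpr) (Ne.symm hqr) hpq e a' b'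
  · exact hPD.1
  · exact hPD.2.1
  · exact hPD.2.2

lemma NoR_of_free {n : ℕ} (c : Finset (Fin 3 × Fin n) → ℕ)
    (hfree : ¬ HasRainbowTightTri c) : NoR (fun x y z => c (triE x y z)) := by
  have perm : ∀ (x y z : Fin n) (s : Finset (Fin 3 × Fin n)),
      ((0 : Fin 3), x) ∈ s → ((1 : Fin 3), y) ∈ s → ((2 : Fin 3), z) ∈ s →
      s.card = 3 → s = triE x y z := by
    intro x y z s h0 h1 h2 hc
    refine Finset.eq_of_subset_of_card_le ?_ ?_ |>.symm
    · intro t ht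
      rcases Finset.mem_insert.mp ht with rfl | ht
      · exact h0
      rcases Finset.mem_insert.mp ht with rfl | ht
      · exact h1
      · rw [Finset.mem_singleton.mp ht]; exact h2
    · rw [hc, (isTriEdge_triE x y z).1]
  have mem3 : ∀ (p : Fin 3 × Fin n) (u v w : Fin 3 × Fin n),
      p = u ∨ p = v ∨ p = w → p ∈ ({u, v, w} : Finset (Fin 3 × Fin n)) := by
    intro p u v w h
    simp only [Finset.mem_insert, Finset.mem_singleton]
    exact h
  have card3 : ∀ (p q r : Fin 3) (a b e : Fin n), p ≠ q → p ≠ r → q ≠ r →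
      ({(p, a), (q, b), (r, e)} : Finset (Fin 3 × Fin n)).card = 3 :=
    fun p q r a b e hpq hpr hqr => (triEdge_mk p q r hpq hpr hqr a b e).1
  refine ⟨?_, ?_, ?_, ?_, ?_, ?_⟩
  · intro x x' y y' z hx hy
    have h := hfree_aux c hfree 0 1 2 (by decide) (by decide) (by decide) x x' y y' z hx hy
    rwa [perm x y z _ (by simp) (by simp) (by simp) (card3 _ _ _ _ _ _ (by decide) (by decide) (by decide)),
      perm x' y z _ (mem3 _ _ _ _ (by tauto)) (mem3 _ _ _ _ (by tauto)) (mem3 _ _ _ _ (by tauto)) (card3 1 2 0 y z x' (by decide) (by decide) (by decide)),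
      perm x' y' z _ (mem3 _ _ _ _ (by tauto)) (mem3 _ _ _ _ (by tauto)) (mem3 _ _ _ _ (by tauto)) (card3 2 0 1 z x' y' (by decide) (by decide) (by decide))] at h
  · intro x x' y y' z hx hy
    have h := hfree_aux c hfree 1 0 2 (by decide) (by decide) (by decide) y y' x x' z hy hx
    rwa [perm x y z _ (mem3 _ _ _ _ (by tauto)) (mem3 _ _ _ _ (by tauto)) (mem3 _ _ _ _ (by tauto)) (card3 1 0 2 y x z (by decide) (by decide) (by decide)),
      perm x y' z _ (mem3 _ _ _ _ (by tauto)) (mem3 _ _ _ _ (by tauto)) (mem3 _ _ _ _ (by tauto)) (card3 0 2 1 x z y' (by decide) (by decide) (by decide)),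
      perm x' y' z _ (mem3 _ _ _ _ (by tauto)) (mem3 _ _ _ _ (by tauto)) (mem3 _ _ _ _ (by tauto)) (card3 2 1 0 z y' x' (by decide) (by decide) (by decide))] at h
  · intro x x' y z z' hx hz
    have h := hfree_aux c hfree 0 2 1 (by decide) (by decide) (by decide) x x' z z' y hx hz
    rwa [perm x y z _ (mem3 _ _ _ _ (by tauto)) (mem3 _ _ _ _ (by tauto)) (mem3 _ _ _ _ (by tauto)) (card3 0 2 1 x z y (by decide) (by decide) (by decide)),
      perm x' y z _ (mem3 _ _ _ _ (by tauto)) (mem3 _ _ _ _ (by tauto)) (mem3 _ _ _ _ (by tauto)) (card3 2 1 0 z y x' (by decide) (by decide) (by decide)),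
      perm x' y z' _ (mem3 _ _ _ _ (by tauto)) (mem3 _ _ _ _ (by tauto)) (mem3 _ _ _ _ (by tauto)) (card3 1 0 2 y x' z' (by decide) (by decide) (by decide))] at h
  · intro x x' y z z' hx hz
    have h := hfree_aux c hfree 2 0 1 (by decide) (by decide) (by decide) z z' x x' y hz hx
    rwa [perm x y z _ (mem3 _ _ _ _ (by tauto)) (mem3 _ _ _ _ (by tauto)) (mem3 _ _ _ _ (by tauto)) (card3 2 0 1 z x y (by decide) (by decide) (by decide)),
      perm x y z' _ (mem3 _ _ _ _ (by tauto)) (mem3 _ _ _ _ (by tauto)) (mem3 _ _ _ _ (by tauto)) (card3 0 1 2 x y z' (by decide) (by decide) (by decide)),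
      perm x' y z' _ (mem3 _ _ _ _ (by tauto)) (mem3 _ _ _ _ (by tauto)) (mem3 _ _ _ _ (by tauto)) (card3 1 2 0 y z' x' (by decide) (by decide) (by decide))] at h
  · intro x y y' z z' hy hz
    have h := hfree_aux c hfree 1 2 0 (by decide) (by decide) (by decide) y y' z z' x hy hz
    rwa [perm x y z _ (mem3 _ _ _ _ (by tauto)) (mem3 _ _ _ _ (by tauto)) (mem3 _ _ _ _ (by tauto)) (card3 1 2 0 y z x (by decide) (by decide) (by decide)),
      perm x y' z _ (mem3 _ _ _ _ (by tauto)) (mem3 _ _ _ _ (by tauto)) (mem3 _ _ _ _ (by tauto)) (card3 2 0 1 z x y' (by decide) (by decide) (by decide)),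
      perm x y' z' _ (mem3 _ _ _ _ (by tauto)) (mem3 _ _ _ _ (by tauto)) (mem3 _ _ _ _ (by tauto)) (card3 0 1 2 x y' z' (by decide) (by decide) (by decide))] at h
  · intro x y y' z z' hy hz
    have h := hfree_aux c hfree 2 1 0 (by decide) (by decide) (by decide) z z' y y' x hz hy
    rwa [perm x y z _ (mem3 _ _ _ _ (by tauto)) (mem3 _ _ _ _ (by tauto)) (mem3 _ _ _ _ (by tauto)) (card3 2 1 0 z y x (by decide) (by decide) (by decide)),
      perm x y z' _ (mem3 _ _ _ _ (by tauto)) (mem3 _ _ _ _ (by tauto)) (mem3 _ _ _ _ (by tauto)) (card3 1 0 2 y x z' (by decide) (by decide) (by decide)),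
      perm x y' z' _ (mem3 _ _ _ _ (by tauto)) (mem3 _ _ _ _ (by tauto)) (mem3 _ _ _ _ (by tauto)) (card3 0 2 1 x z' y' (by decide) (by decide) (by decide))] at h

set_option maxRecDepth 40000 in
lemma hSDR : ∀ T : Fin 3 → Finset (Fin 3), (∀ l, 1 < (T l).card) →
    (∀ t, ∃ l, t ∈ T l) →
    ∃ g : Fin 3 → Fin 3, Function.Injective g ∧ ∀ l, g l ∈ T l := by decide

theorem core {n : ℕ} (hn : 3 ≤ n) (d : Fin n → Fin n → Fin n → ℕ) (hN : NoR d)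
    (k : ℕ)
    (hCk : ((Finset.univ : Finset (Fin n × Fin n × Fin n)).image
      (fun t => d t.1 t.2.1 t.2.2)).card = k) (hk3 : 3 ≤ k) :
    ((∃ g : Fin n → ℕ, ∀ x y z, d x y z = g x) ∨
     (∃ g : Fin n → ℕ, ∀ x y z, d x y z = g y) ∨
     (∃ g : Fin n → ℕ, ∀ x y z, d x y z = g z)) ∨
    (∃ σ : ℕ → ℕ,
      Set.InjOn σ (((Finset.univ : Finset (Fin n × Fin n × Fin n)).image
        (fun t => d t.1 t.2.1 t.2.2) : Finset ℕ) : Set ℕ) ∧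
      (∀ x y z, σ (d x y z) ∈ Finset.Icc 1 k) ∧
      ∃ Q : Fin 3 → ℕ → Finset (Fin n),
        (∀ ℓ : Fin 3, ∀ i ∈ Finset.Icc 2 k, ∀ j ∈ Finset.Icc 2 k, i ≠ j →
          Disjoint (Q ℓ i) (Q ℓ j)) ∧
        (∀ ℓ : Fin 3, ∀ w : Fin n, ∃ i ∈ Finset.Icc 2 k, w ∈ Q ℓ i) ∧
        (∀ i ∈ Finset.Icc 2 k, ∀ x y z, x ∈ Q 0 i → y ∈ Q 1 i → z ∈ Q 2 i →
          σ (d x y z) = 1 ∨ σ (d x y z) = i) ∧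
        (∀ x y z, (∀ i ∈ Finset.Icc 2 k, ¬(x ∈ Q 0 i ∧ y ∈ Q 1 i ∧ z ∈ Q 2 i)) →
          σ (d x y z) = 1)) := by
  classical
  have i0 : Fin n := ⟨0, by omega⟩
  set C : Finset ℕ :=
    (Finset.univ : Finset (Fin n × Fin n × Fin n)).image (fun t => d t.1 t.2.1 t.2.2)
    with hCdef
  have hmemC : ∀ x y z, d x y z ∈ C := fun x y z =>
    Finset.mem_image.mpr ⟨(x, y, z), Finset.mem_univ _, rfl⟩
  have h2k : 2 < C.card := by omega
  have hPDg : ∃ a b g : Fin n × Fin n × Fin n,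
      PD (d a.1 a.2.1 a.2.2) (d b.1 b.2.1 b.2.2) (d g.1 g.2.1 g.2.2) := by
    obtain ⟨t1, t2, t3, ht1, ht2, ht3, h12, h13, h23⟩ := Finset.two_lt_card_iff.mp h2k
    obtain ⟨a1, -, rfl⟩ := Finset.mem_image.mp ht1
    obtain ⟨a2, -, rfl⟩ := Finset.mem_image.mp ht2
    obtain ⟨a3, -, rfl⟩ := Finset.mem_image.mp ht3
    exact ⟨a1, a2, a3, h12, h13, h23⟩
  by_cases hD0 : ∀ x y z y' z', d x y z = d x y' z'
  · exact Or.inl (Or.inl ⟨fun x => d x i0 i0, fun x y z => hD0 x y z i0 i0⟩)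
  by_cases hD1 : ∀ x y z x' z', d x y z = d x' y z'
  · exact Or.inl (Or.inr (Or.inl ⟨fun y => d i0 y i0, fun x y z => hD1 x y z i0 i0⟩))
  by_cases hD2 : ∀ x y z x' y', d x y z = d x' y' z
  · exact Or.inl (Or.inr (Or.inr ⟨fun z => d i0 i0 z, fun x y z => hD2 x y z i0 i0⟩))
  right
  set L0 : Fin n → Finset ℕ :=
    fun x => Finset.univ.image (fun p : Fin n × Fin n => d x p.1 p.2) with hL0def
  set L1 : Fin n → Finset ℕ :=
    fun y => Finset.univ.image (fun p : Fin n × Fin n => d p.1 y p.2) with hL1def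
  set L2 : Fin n → Finset ℕ :=
    fun z => Finset.univ.image (fun p : Fin n × Fin n => d p.1 p.2 z) with hL2def
  have m0 : ∀ x y z, d x y z ∈ L0 x := fun x y z =>
    Finset.mem_image.mpr ⟨(y, z), Finset.mem_univ _, rfl⟩
  have m1 : ∀ x y z, d x y z ∈ L1 y := fun x y z =>
    Finset.mem_image.mpr ⟨(x, z), Finset.mem_univ _, rfl⟩
  have m2 : ∀ x y z, d x y z ∈ L2 z := fun x y z =>
    Finset.mem_image.mpr ⟨(x, y), Finset.mem_univ _, rfl⟩
  have l0val : ∀ x, ∀ t ∈ L0 x, ∃ p : Fin n × Fin n, d x p.1 p.2 = t := by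
    intro x t ht; obtain ⟨p, -, hp⟩ := Finset.mem_image.mp ht; exact ⟨p, hp⟩
  have l1val : ∀ y, ∀ t ∈ L1 y, ∃ p : Fin n × Fin n, d p.1 y p.2 = t := by
    intro y t ht; obtain ⟨p, -, hp⟩ := Finset.mem_image.mp ht; exact ⟨p, hp⟩
  have l2val : ∀ z, ∀ t ∈ L2 z, ∃ p : Fin n × Fin n, d p.1 p.2 z = t := by
    intro z t ht; obtain ⟨p, -, hp⟩ := Finset.mem_image.mp ht; exact ⟨p, hp⟩
  have hc0 : ∀ x, (L0 x).card ≤ 2 := by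
    intro x
    by_contra hgt
    push_neg at hgt
    obtain ⟨u1, u2, u3, hu1, hu2, hu3, e12, e13, e23⟩ := Finset.two_lt_card_iff.mp hgt
    obtain ⟨p1, rfl⟩ := l0val x u1 hu1
    obtain ⟨p2, rfl⟩ := l0val x u2 hu2
    obtain ⟨p3, rfl⟩ := l0val x u3 hu3
    rcases key (fun a b c => d c a b) (NoR_cyc hN) x ⟨p1, p2, p3, e12, e13, e23⟩ with h | h
    · exact hD1 fun x y z x' z' => h y z x z' x'
    · exact hD2 fun x y z x' y' => h y z x y' x'
  have hc1 : ∀ y, (L1 y).card ≤ 2 := by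
    intro y
    by_contra hgt
    push_neg at hgt
    obtain ⟨u1, u2, u3, hu1, hu2, hu3, e12, e13, e23⟩ := Finset.two_lt_card_iff.mp hgt
    obtain ⟨p1, rfl⟩ := l1val y u1 hu1
    obtain ⟨p2, rfl⟩ := l1val y u2 hu2
    obtain ⟨p3, rfl⟩ := l1val y u3 hu3
    rcases key (fun a b c => d b c a) (NoR_cyc (NoR_cyc hN)) y
        ⟨(p1.2, p1.1), (p2.2, p2.1), (p3.2, p3.1), e12, e13, e23⟩ with h | h
    · exact hD2 fun x y z x' y' => h z x y x' y'
    · exact hD0 fun x y z y' z' => h z x y z' y'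
  have hc2 : ∀ z, (L2 z).card ≤ 2 := by
    intro z
    by_contra hgt
    push_neg at hgt
    obtain ⟨u1, u2, u3, hu1, hu2, hu3, e12, e13, e23⟩ := Finset.two_lt_card_iff.mp hgt
    obtain ⟨p1, rfl⟩ := l2val z u1 hu1
    obtain ⟨p2, rfl⟩ := l2val z u2 hu2
    obtain ⟨p3, rfl⟩ := l2val z u3 hu3
    rcases key d hN z ⟨p1, p2, p3, e12, e13, e23⟩ with h | h
    · exact hD0 h
    · exact hD1 h
  set F : Finset (Finset ℕ) :=
    (Finset.univ.image L0) ∪ (Finset.univ.image L1) ∪ (Finset.univ.image L2) with hFdef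
  have hF0 : ∀ x, L0 x ∈ F := by
    intro x
    simp only [hFdef, Finset.mem_union, Finset.mem_image]
    exact Or.inl (Or.inl ⟨x, Finset.mem_univ _, rfl⟩)
  have hF1 : ∀ y, L1 y ∈ F := by
    intro y
    simp only [hFdef, Finset.mem_union, Finset.mem_image]
    exact Or.inl (Or.inr ⟨y, Finset.mem_univ _, rfl⟩)
  have hF2 : ∀ z, L2 z ∈ F := by
    intro z
    simp only [hFdef, Finset.mem_union, Finset.mem_image]
    exact Or.inr ⟨z, Finset.mem_univ _, rfl⟩
  have hFchar : ∀ S ∈ F, (∃ x, S = L0 x) ∨ (∃ y, S = L1 y) ∨ (∃ z, S = L2 z) := by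
    intro S hS
    simp only [hFdef, Finset.mem_union, Finset.mem_image] at hS
    rcases hS with (⟨x, -, h⟩ | ⟨y, -, h⟩) | ⟨z, -, h⟩
    exacts [Or.inl ⟨x, h.symm⟩, Or.inr (Or.inl ⟨y, h.symm⟩), Or.inr (Or.inr ⟨z, h.symm⟩)]
  have hFcard : ∀ S ∈ F, S.card ≤ 2 := by
    intro S hS
    rcases hFchar S hS with ⟨x, rfl⟩ | ⟨y, rfl⟩ | ⟨z, rfl⟩
    exacts [hc0 x, hc1 y, hc2 z]
  have hFval : ∀ S ∈ F, ∀ t ∈ S, ∃ x y z, d x y z = t := by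
    intro S hS t ht
    rcases hFchar S hS with ⟨x, rfl⟩ | ⟨y, rfl⟩ | ⟨z, rfl⟩
    · obtain ⟨p, hp⟩ := l0val x t ht; exact ⟨x, p.1, p.2, hp⟩
    · obtain ⟨p, hp⟩ := l1val y t ht; exact ⟨p.1, y, p.2, hp⟩
    · obtain ⟨p, hp⟩ := l2val z t ht; exact ⟨p.1, p.2, z, hp⟩
  have hFne : ∀ S ∈ F, S.Nonempty := by
    intro S hS
    rcases hFchar S hS with ⟨x, rfl⟩ | ⟨y, rfl⟩ | ⟨z, rfl⟩
    exacts [⟨d x i0 i0, m0 x i0 i0⟩, ⟨d i0 y i0, m1 i0 y i0⟩, ⟨d i0 i0 z, m2 i0 i0 z⟩]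
  have hFint : ∀ S ∈ F, ∀ T ∈ F, (S ∩ T).Nonempty := by
    intro S hS T hT
    rcases hFchar S hS with ⟨x, rfl⟩ | ⟨y, rfl⟩ | ⟨z, rfl⟩ <;>
      rcases hFchar T hT with ⟨x', rfl⟩ | ⟨y', rfl⟩ | ⟨z', rfl⟩
    · exact slice_inter hn d L0 L1 L2 m0 m1 m2 hc1 hc2 hPDg x x'
    · exact ⟨d x y' i0, Finset.mem_inter.mpr ⟨m0 x y' i0, m1 x y' i0⟩⟩
    · exact ⟨d x i0 z', Finset.mem_inter.mpr ⟨m0 x i0 z', m2 x i0 z'⟩⟩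
    · exact ⟨d x' y i0, Finset.mem_inter.mpr ⟨m1 x' y i0, m0 x' y i0⟩⟩
    · refine slice_inter hn (fun a b c => d b a c) L1 L0 L2
        (fun a b c => m1 b a c) (fun a b c => m0 b a c) (fun a b c => m2 b a c)
        hc0 hc2 ?_ y y'
      obtain ⟨a, b, g, h⟩ := hPDg
      exact ⟨(a.2.1, a.1, a.2.2), (b.2.1, b.1, b.2.2), (g.2.1, g.1, g.2.2), h⟩
    · exact ⟨d i0 y z', Finset.mem_inter.mpr ⟨m1 i0 y z', m2 i0 y z'⟩⟩
    · exact ⟨d x' i0 z, Finset.mem_inter.mpr ⟨m2 x' i0 z, m0 x' i0 z⟩⟩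
    · exact ⟨d i0 y' z, Finset.mem_inter.mpr ⟨m2 i0 y' z, m1 i0 y' z⟩⟩
    · refine slice_inter hn (fun a b c => d b c a) L2 L0 L1
        (fun a b c => m2 b c a) (fun a b c => m0 b c a) (fun a b c => m1 b c a)
        hc0 hc1 ?_ z z'
      obtain ⟨a, b, g, h⟩ := hPDg
      exact ⟨(a.2.2, a.1, a.2.1), (b.2.2, b.1, b.2.1), (g.2.2, g.1, g.2.1), h⟩
  have hpi : ∃ π, ∀ S ∈ F, π ∈ S := by
    by_cases hsing : ∃ S ∈ F, S.card = 1
    · obtain ⟨S, hS, hS1⟩ := hsing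
      obtain ⟨m, rfl⟩ := Finset.card_eq_one.mp hS1
      refine ⟨m, fun T hT => ?_⟩
      obtain ⟨t, ht⟩ := hFint _ hS T hT
      rw [Finset.mem_inter] at ht
      rw [← Finset.mem_singleton.mp ht.1]
      exact ht.2
    · push_neg at hsing
      have hall2 : ∀ S ∈ F, S.card = 2 := by
        intro S hS
        have h1 := hFcard S hS
        have h2 := Finset.card_pos.mpr (hFne S hS)
        have h3 := hsing S hS
        omega
      obtain ⟨aa, bb, hab, hAeq⟩ := Finset.card_eq_two.mp (hall2 _ (hF0 i0))
      by_cases hπa : ∀ S ∈ F, aa ∈ S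
      · exact ⟨aa, hπa⟩
      push_neg at hπa
      obtain ⟨M, hM, haM⟩ := hπa
      have hbM : bb ∈ M := by
        obtain ⟨t, ht⟩ := hFint _ (hF0 i0) M hM
        rw [Finset.mem_inter, hAeq] at ht
        rcases Finset.mem_insert.mp ht.1 with rfl | h
        · exact absurd ht.2 haM
        · rw [← Finset.mem_singleton.mp h]
          exact ht.2
      have hMe : (M.erase bb).card = 1 := by
        rw [Finset.card_erase_of_mem hbM, hall2 M hM]
      obtain ⟨cc, hcc⟩ := Finset.card_eq_one.mp hMe
      have hccM : cc ∈ M.erase bb := by rw [hcc]; exact Finset.mem_singleton_self cc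
      have hcb : cc ≠ bb := Finset.ne_of_mem_erase hccM
      have hccM2 : cc ∈ M := Finset.mem_of_mem_erase hccM
      have hca : cc ≠ aa := fun h => haM (h ▸ hccM2)
      have hMeq : M = {bb, cc} := by
        rw [← Finset.insert_erase hbM, hcc]
      by_cases hπb : ∀ S ∈ F, bb ∈ S
      · exact ⟨bb, hπb⟩
      push_neg at hπb
      obtain ⟨N, hN2, hbN⟩ := hπb
      have haN : aa ∈ N := by
        obtain ⟨t, ht⟩ := hFint _ (hF0 i0) N hN2
        rw [Finset.mem_inter, hAeq] at ht
        rcases Finset.mem_insert.mp ht.1 with rfl | h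
        · exact ht.2
        · exact absurd (Finset.mem_singleton.mp h ▸ ht.2) hbN
      have hNe : (N.erase aa).card = 1 := by
        rw [Finset.card_erase_of_mem haN, hall2 N hN2]
      obtain ⟨nn, hnn⟩ := Finset.card_eq_one.mp hNe
      have hnnN : nn ∈ N.erase aa := by rw [hnn]; exact Finset.mem_singleton_self nn
      have hna : nn ≠ aa := Finset.ne_of_mem_erase hnnN
      have hnnN2 : nn ∈ N := Finset.mem_of_mem_erase hnnN
      have hnb : nn ≠ bb := fun h => hbN (h ▸ hnnN2)
      have hNeq0 : N = {aa, nn} := by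
        rw [← Finset.insert_erase haN, hnn]
      have hcn : cc = nn := by
        obtain ⟨t, ht⟩ := hFint M hM N hN2
        rw [Finset.mem_inter, hMeq, hNeq0] at ht
        obtain ⟨h1, h2⟩ := ht
        rcases Finset.mem_insert.mp h1 with rfl | h1
        · rcases Finset.mem_insert.mp h2 with h | h
          · exact absurd h (Ne.symm hab)
          · exact absurd (Finset.mem_singleton.mp h).symm hnb
        · rw [Finset.mem_singleton.mp h1] at h2
          rcases Finset.mem_insert.mp h2 with h | h
          · exact absurd h hca
          · exact Finset.mem_singleton.mp h
      rw [← hcn] at hNeq0 hna hnb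
      have hNeq : N = {aa, cc} := hNeq0
      have pair_elt : ∀ t s : ℕ, ({t, s} : Finset ℕ) ∈ F →
          t ∉ ({aa, bb, cc} : Finset ℕ) → False := by
        intro t s hSF htno
        simp only [Finset.mem_insert, Finset.mem_singleton, not_or] at htno
        obtain ⟨hta, htb, htc⟩ := htno
        have gA : s ∈ ({aa, bb} : Finset ℕ) := by
          obtain ⟨u, hu⟩ := hFint _ hSF _ (hF0 i0)
          rw [Finset.mem_inter, hAeq] at hu
          obtain ⟨hu1, hu2⟩ := hu
          rcases Finset.mem_insert.mp hu1 with rfl | h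
          · rcases Finset.mem_insert.mp hu2 with h2 | h2
            exacts [absurd h2 hta, absurd (Finset.mem_singleton.mp h2) htb]
          · rw [Finset.mem_singleton.mp h] at hu2
            exact hu2
        have gM : s ∈ ({bb, cc} : Finset ℕ) := by
          obtain ⟨u, hu⟩ := hFint _ hSF _ hM
          rw [Finset.mem_inter, hMeq] at hu
          obtain ⟨hu1, hu2⟩ := hu
          rcases Finset.mem_insert.mp hu1 with rfl | h
          · rcases Finset.mem_insert.mp hu2 with h2 | h2
            exacts [absurd h2 htb, absurd (Finset.mem_singleton.mp h2) htc]
          · rw [Finset.mem_singleton.mp h] at hu2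
            exact hu2
        have gN : s ∈ ({aa, cc} : Finset ℕ) := by
          obtain ⟨u, hu⟩ := hFint _ hSF _ hN2
          rw [Finset.mem_inter, hNeq] at hu
          obtain ⟨hu1, hu2⟩ := hu
          rcases Finset.mem_insert.mp hu1 with rfl | h
          · rcases Finset.mem_insert.mp hu2 with h2 | h2
            exacts [absurd h2 hta, absurd (Finset.mem_singleton.mp h2) htc]
          · rw [Finset.mem_singleton.mp h] at hu2
            exact hu2
        simp only [Finset.mem_insert, Finset.mem_singleton] at gA gM gN
        rcases gA with rfl | rfl
        · rcases gM with h | h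
          exacts [hab h, hca h.symm]
        · rcases gN with h | h
          exacts [hab h.symm, hcb h.symm]
      have htri : ∀ S ∈ F, S = ({aa, bb} : Finset ℕ) ∨ S = {bb, cc} ∨ S = {aa, cc} := by
        intro S hS
        obtain ⟨p, q, hpq, rfl⟩ := Finset.card_eq_two.mp (hall2 S hS)
        have hp : p ∈ ({aa, bb, cc} : Finset ℕ) := by
          by_contra h; exact pair_elt p q hS h
        have hq : q ∈ ({aa, bb, cc} : Finset ℕ) := by
          by_contra h; exact pair_elt q p (by rwa [Finset.pair_comm]) h
        simp only [Finset.mem_insert, Finset.mem_singleton] at hp hq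
        rcases hp with rfl | rfl | rfl <;> rcases hq with rfl | rfl | rfl
        · exact absurd rfl hpq
        · exact Or.inl rfl
        · exact Or.inr (Or.inr rfl)
        · exact Or.inl (Finset.pair_comm _ _)
        · exact absurd rfl hpq
        · exact Or.inr (Or.inl rfl)
        · exact Or.inr (Or.inr (Finset.pair_comm _ _))
        · exact Or.inr (Or.inl (Finset.pair_comm _ _))
        · exact absurd rfl hpq
      exfalso
      set Ty : Fin 3 → Finset ℕ := ![{aa, bb}, {bb, cc}, {aa, cc}] with hTydef
      have hTy0 : Ty 0 = {aa, bb} := rfl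
      have hTy1 : Ty 1 = {bb, cc} := rfl
      have hTy2 : Ty 2 = {aa, cc} := rfl
      have htri2 : ∀ S ∈ F, ∃ ty : Fin 3, S = Ty ty := by
        intro S hS
        rcases htri S hS with h | h | h
        exacts [⟨0, by rw [hTy0, h]⟩, ⟨1, by rw [hTy1, h]⟩, ⟨2, by rw [hTy2, h]⟩]
      set Lk : Fin 3 → Fin n → Finset ℕ := ![L0, L1, L2] with hLkdef
      have hLkF : ∀ ℓ v, Lk ℓ v ∈ F := by
        intro ℓ v
        fin_cases ℓ
        exacts [hF0 v, hF1 v, hF2 v]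
      set T : Fin 3 → Finset (Fin 3) :=
        fun ℓ => Finset.univ.filter (fun ty => ∃ v, Lk ℓ v = Ty ty) with hTdef
      have hcard3 : ({aa, bb, cc} : Finset ℕ).card = 3 := by
        rw [Finset.card_insert_of_notMem ?_, Finset.card_insert_of_notMem ?_,
          Finset.card_singleton]
        · simp only [Finset.mem_singleton]; exact hcb.symm
        · simp only [Finset.mem_insert, Finset.mem_singleton, not_or]
          exact ⟨hab, fun h => hca h.symm⟩
      have hTwo : ∀ ℓ, 1 < (T ℓ).card := by
        intro ℓ
        have hdiff : ∃ v w, Lk ℓ v ≠ Lk ℓ w := by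
          by_contra hcon
          push_neg at hcon
          have hsub : ({aa, bb, cc} : Finset ℕ) ⊆ Lk ℓ i0 := by
            intro t ht
            have htv : ∃ x y z, d x y z = t := by
              simp only [Finset.mem_insert, Finset.mem_singleton] at ht
              rcases ht with h | h | h
              · rw [h]; exact hFval _ (hF0 i0) aa (by rw [hAeq]; exact Finset.mem_insert_self _ _)
              · rw [h]; exact hFval _ hM bb (by rw [hMeq]; exact Finset.mem_insert_self _ _)
              · rw [h]; exact hFval _ hM cc (by rw [hMeq]; simp)
            obtain ⟨x, y, z, rfl⟩ := htv
            fin_cases ℓ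
            · rw [hcon i0 x]; exact m0 x y z
            · rw [hcon i0 y]; exact m1 x y z
            · rw [hcon i0 z]; exact m2 x y z
          have h1 := Finset.card_le_card hsub
          have h2 := hFcard _ (hLkF ℓ i0)
          omega
        obtain ⟨v, w, hvw⟩ := hdiff
        obtain ⟨tv, htv⟩ := htri2 _ (hLkF ℓ v)
        obtain ⟨tw, htw⟩ := htri2 _ (hLkF ℓ w)
        refine Finset.one_lt_card_iff.mpr ⟨tv, tw, ?_, ?_, ?_⟩
        · exact Finset.mem_filter.mpr ⟨Finset.mem_univ _, ⟨v, htv⟩⟩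
        · exact Finset.mem_filter.mpr ⟨Finset.mem_univ _, ⟨w, htw⟩⟩
        · rintro rfl; exact hvw (htv.trans htw.symm)
      have hOcc : ∀ ty : Fin 3, ∃ ℓ, ty ∈ T ℓ := by
        intro ty
        have hex : ∃ S, S ∈ F ∧ S = Ty ty := by
          fin_cases ty
          · exact ⟨L0 i0, hF0 i0, hAeq⟩
          · exact ⟨M, hM, hMeq⟩
          · exact ⟨N, hN2, hNeq⟩
        obtain ⟨S, hSF, hSeq⟩ := hex
        rcases hFchar S hSF with ⟨x, rfl⟩ | ⟨y, rfl⟩ | ⟨z, rfl⟩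
        · exact ⟨0, Finset.mem_filter.mpr ⟨Finset.mem_univ _, ⟨x, hSeq⟩⟩⟩
        · exact ⟨1, Finset.mem_filter.mpr ⟨Finset.mem_univ _, ⟨y, hSeq⟩⟩⟩
        · exact ⟨2, Finset.mem_filter.mpr ⟨Finset.mem_univ _, ⟨z, hSeq⟩⟩⟩
      obtain ⟨g, hginj, hgT⟩ := hSDR T hTwo hOcc
      have hvert : ∀ ℓ, ∃ v, Lk ℓ v = Ty (g ℓ) := fun ℓ =>
        (Finset.mem_filter.mp (hgT ℓ)).2
      obtain ⟨vx, hvx⟩ := hvert 0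
      obtain ⟨vy, hvy⟩ := hvert 1
      obtain ⟨vz, hvz⟩ := hvert 2
      have hsurj := Finite.injective_iff_surjective.mp hginj
      have h0 : d vx vy vz ∈ Ty (g 0) := by rw [← hvx]; exact m0 vx vy vz
      have h1 : d vx vy vz ∈ Ty (g 1) := by rw [← hvy]; exact m1 vx vy vz
      have h2 : d vx vy vz ∈ Ty (g 2) := by rw [← hvz]; exact m2 vx vy vz
      have htall : ∀ i : Fin 3, d vx vy vz ∈ Ty i := by
        intro i
        obtain ⟨ℓ, hℓ⟩ := hsurj i
        subst hℓ
        fin_cases ℓ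
        exacts [h0, h1, h2]
      have e0 := htall 0
      have e1 := htall 1
      have e2 := htall 2
      rw [hTy0] at e0; rw [hTy1] at e1; rw [hTy2] at e2
      simp only [Finset.mem_insert, Finset.mem_singleton] at e0 e1 e2
      rcases e0 with h | h <;> rcases e1 with h2 | h2 <;> rcases e2 with h3 | h3
      · exact hab (h.symm.trans h2)
      · exact hab (h.symm.trans h2)
      · exact hca (h2.symm.trans h)
      · exact hca (h2.symm.trans h)
      · exact hab (h3.symm.trans h)
      · exact hcb (h3.symm.trans h)
      · exact hcb (h2.symm.trans h)
      · exact hcb (h2.symm.trans h)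
  obtain ⟨π, hπ⟩ := hpi
  have hπC : π ∈ C := by
    obtain ⟨x, y, z, h⟩ := hFval _ (hF0 i0) π (hπ _ (hF0 i0))
    rw [← h]; exact hmemC x y z
  set Lk : Fin 3 → Fin n → Finset ℕ := ![L0, L1, L2] with hLkdef
  have hLkF : ∀ ℓ v, Lk ℓ v ∈ F := by
    intro ℓ v
    fin_cases ℓ
    exacts [hF0 v, hF1 v, hF2 v]
  have hπLk : ∀ ℓ v, π ∈ Lk ℓ v := fun ℓ v => hπ _ (hLkF ℓ v)
  set jc : Fin 3 → Fin n → ℕ := fun ℓ v =>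
    if h : ((Lk ℓ v).erase π).Nonempty then h.choose else π with hjcdef
  have hjc_spec : ∀ ℓ v, jc ℓ v = π ∨ (jc ℓ v ∈ Lk ℓ v ∧ jc ℓ v ≠ π) := by
    intro ℓ v
    by_cases h : ((Lk ℓ v).erase π).Nonempty
    · right
      have he : jc ℓ v = h.choose := by simp only [hjcdef]; rw [dif_pos h]
      rw [he]
      exact ⟨Finset.mem_of_mem_erase h.choose_spec, Finset.ne_of_mem_erase h.choose_spec⟩
    · left
      simp only [hjcdef]
      rw [dif_neg h]
  have hjc_uniq : ∀ ℓ v t, t ∈ Lk ℓ v → t ≠ π → t = jc ℓ v := by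
    intro ℓ v t ht htπ
    have hte : t ∈ (Lk ℓ v).erase π := Finset.mem_erase.mpr ⟨htπ, ht⟩
    have hne : ((Lk ℓ v).erase π).Nonempty := ⟨t, hte⟩
    have hcard1 : ((Lk ℓ v).erase π).card ≤ 1 := by
      rw [Finset.card_erase_of_mem (hπLk ℓ v)]
      have := hFcard _ (hLkF ℓ v)
      omega
    have hch : jc ℓ v = hne.choose := by simp only [hjcdef]; rw [dif_pos hne]
    rw [hch]
    exact Finset.card_le_one.mp hcard1 t hte hne.choose hne.choose_spec
  have hjcC : ∀ ℓ v, jc ℓ v ∈ C := by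
    intro ℓ v
    rcases hjc_spec ℓ v with h | ⟨h, -⟩
    · rw [h]; exact hπC
    · obtain ⟨x, y, z, hv⟩ := hFval _ (hLkF ℓ v) _ h
      rw [← hv]; exact hmemC x y z
  set lst : List ℕ := (C.erase π).sort (· ≤ ·) with hlstdef
  set σ : ℕ → ℕ := fun t => if t = π then 1 else 2 + lst.idxOf t with hσdef
  have hlen : lst.length = k - 1 := by
    rw [hlstdef, Finset.length_sort, Finset.card_erase_of_mem hπC, hCk]
  have hmem_lst : ∀ t, t ∈ C → t ≠ π → t ∈ lst := by
    intro t htC htπ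
    rw [hlstdef, Finset.mem_sort]
    exact Finset.mem_erase.mpr ⟨htπ, htC⟩
  have hσπ : σ π = 1 := by simp [hσdef]
  have hσval : ∀ t, t ≠ π → σ t = 2 + lst.idxOf t := by
    intro t htπ
    simp only [hσdef]
    rw [if_neg htπ]
  have hσrange : ∀ t, t ∈ C → t ≠ π → 2 ≤ σ t ∧ σ t ≤ k := by
    intro t htC htπ
    have hidx : lst.idxOf t < lst.length := List.idxOf_lt_length_iff.mpr (hmem_lst t htC htπ)
    rw [hσval t htπ]
    omega
  have hσinj : Set.InjOn σ (C : Set ℕ) := by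
    intro s hs t ht hst
    have hs2 : s ∈ C := hs
    have ht2 : t ∈ C := ht
    by_cases hsπ : s = π <;> by_cases htπ : t = π
    · rw [hsπ, htπ]
    · exfalso
      rw [hsπ, hσπ] at hst
      have := (hσrange t ht2 htπ).1
      omega
    · exfalso
      rw [htπ, hσπ] at hst
      have := (hσrange s hs2 hsπ).1
      omega
    · rw [hσval s hsπ, hσval t htπ] at hst
      have heq : lst.idxOf s = lst.idxOf t := by omega
      exact (List.idxOf_inj (hmem_lst s hs2 hsπ)).mp heq
  set idx : Fin 3 → Fin n → ℕ := fun ℓ v => if jc ℓ v = π then 2 else σ (jc ℓ v) with hidxdef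
  have hidx2 : ∀ ℓ v, jc ℓ v ≠ π → idx ℓ v = σ (jc ℓ v) := by
    intro ℓ v h
    simp only [hidxdef]
    rw [if_neg h]
  have hidx_mem : ∀ ℓ v, idx ℓ v ∈ Finset.Icc 2 k := by
    intro ℓ v
    by_cases h : jc ℓ v = π
    · have : idx ℓ v = 2 := by simp only [hidxdef]; rw [if_pos h]
      rw [this]
      exact Finset.mem_Icc.mpr ⟨le_refl 2, by omega⟩
    · have := hσrange (jc ℓ v) (hjcC ℓ v) h
      rw [hidx2 ℓ v h]
      exact Finset.mem_Icc.mpr ⟨this.1, this.2⟩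
  set Q : Fin 3 → ℕ → Finset (Fin n) :=
    fun ℓ i => Finset.univ.filter (fun v => idx ℓ v = i) with hQdef
  have hQmem : ∀ ℓ v i, v ∈ Q ℓ i ↔ idx ℓ v = i := by
    intro ℓ v i
    simp only [hQdef, Finset.mem_filter, Finset.mem_univ, true_and]
  have hlk0 : ∀ x y z, d x y z ∈ Lk 0 x := m0
  have hlk1 : ∀ x y z, d x y z ∈ Lk 1 y := m1
  have hlk2 : ∀ x y z, d x y z ∈ Lk 2 z := m2
  refine ⟨σ, hσinj, ?_, Q, ?_, ?_, ?_, ?_⟩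
  · intro x y z
    by_cases h : d x y z = π
    · rw [h, hσπ]
      exact Finset.mem_Icc.mpr ⟨le_refl 1, by omega⟩
    · have := hσrange _ (hmemC x y z) h
      exact Finset.mem_Icc.mpr ⟨by omega, this.2⟩
  · intro ℓ i hi j hj hij
    rw [Finset.disjoint_left]
    intro v hv hv2
    rw [hQmem] at hv hv2
    exact hij (hv.symm.trans hv2)
  · intro ℓ w
    exact ⟨idx ℓ w, hidx_mem ℓ w, (hQmem ℓ w _).mpr rfl⟩
  · intro i hi x y z hx hy hz
    by_cases h : d x y z = π
    · left; rw [h, hσπ]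
    · right
      have h0 : d x y z = jc 0 x := hjc_uniq 0 x _ (hlk0 x y z) h
      have hjπ : jc 0 x ≠ π := fun hh => h (h0.trans hh)
      rw [hQmem] at hx
      rw [← hx, hidx2 0 x hjπ, ← h0]
  · intro x y z hno
    by_contra hne1
    have hdπ : d x y z ≠ π := fun h => hne1 (by rw [h, hσπ])
    have h0 : d x y z = jc 0 x := hjc_uniq 0 x _ (hlk0 x y z) hdπ
    have h1 : d x y z = jc 1 y := hjc_uniq 1 y _ (hlk1 x y z) hdπ
    have h2 : d x y z = jc 2 z := hjc_uniq 2 z _ (hlk2 x y z) hdπ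
    have e0 : idx 0 x = σ (d x y z) := by
      rw [hidx2 0 x (fun hh => hdπ (h0.trans hh)), ← h0]
    have e1 : idx 1 y = σ (d x y z) := by
      rw [hidx2 1 y (fun hh => hdπ (h1.trans hh)), ← h1]
    have e2 : idx 2 z = σ (d x y z) := by
      rw [hidx2 2 z (fun hh => hdπ (h2.trans hh)), ← h2]
    apply hno (idx 0 x) (hidx_mem 0 x)
    exact ⟨(hQmem 0 x _).mpr rfl, (hQmem 1 y _).mpr (e1.trans e0.symm),
      (hQmem 2 z _).mpr (e2.trans e0.symm)⟩
/-- Structure theorem for rainbow-`𝒯`-free colorings of `K^{(3)}_{n,n,n}` (`n ≥ 3`)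
with `k = |C(G)| ≥ 3` colors: either (i) some partite set `V_ℓ` can be partitioned into
`k` parts (the fibers of `g`) such that all edges containing a fixed vertex of `V_ℓ`
receive the color of that vertex; or (ii) after renumbering the colors as `1, …, k`
(via `σ`), each partite set `V_ℓ` partitions into parts `P ℓ i` (`i ∈ {2, …, k}`) such
that edges inside `V_{1,i} ∪ V_{2,i} ∪ V_{3,i}` have color `1` or `i`, and all other
edges have color `1`. -/
theorem tight_path_structure_tripartite (n : ℕ) (hn : 3 ≤ n)
    (c : Finset (Fin 3 × Fin n) → ℕ) (hfree : ¬ HasRainbowTightTri c)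
    (k : ℕ) (hk : k = (triColorFinset c).card) (hk3 : 3 ≤ k) :
    (∃ ℓ : Fin 3, ∃ g : Fin n → ℕ,
      ∀ e : Finset (Fin 3 × Fin n), IsTriEdge e →
        ∀ w : Fin n, (ℓ, w) ∈ e → c e = g w) ∨
    (∃ σ : ℕ → ℕ,
      Set.InjOn σ (triColorFinset c : Set ℕ) ∧
      (∀ e : Finset (Fin 3 × Fin n), IsTriEdge e → σ (c e) ∈ Finset.Icc 1 k) ∧
      ∃ P : Fin 3 → ℕ → Finset (Fin n),
        (∀ ℓ : Fin 3, ∀ i ∈ Finset.Icc 2 k, ∀ j ∈ Finset.Icc 2 k, i ≠ j →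
          Disjoint (P ℓ i) (P ℓ j)) ∧
        (∀ ℓ : Fin 3, ∀ w : Fin n, ∃ i ∈ Finset.Icc 2 k, w ∈ P ℓ i) ∧
        (∀ i ∈ Finset.Icc 2 k, ∀ e : Finset (Fin 3 × Fin n), IsTriEdge e →
          (∀ x ∈ e, x.2 ∈ P x.1 i) → σ (c e) = 1 ∨ σ (c e) = i) ∧
        (∀ e : Finset (Fin 3 × Fin n), IsTriEdge e →
          (∀ i ∈ Finset.Icc 2 k, ¬ (∀ x ∈ e, x.2 ∈ P x.1 i)) → σ (c e) = 1)) := by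
  
  have hNoR := NoR_of_free c hfree
  have hcol := triColor_eq c
  rcases core hn (fun x y z => c (triE x y z)) hNoR k (by rw [hk, hcol]) hk3 with
    (⟨g, hg⟩ | ⟨g, hg⟩ | ⟨g, hg⟩) | ⟨σ, hinj, hmem, Q, hdis, hcov, hin, hout⟩
  · refine Or.inl ⟨0, g, ?_⟩
    intro e he w hw
    obtain ⟨x, y, z, rfl⟩ := triE_decode he
    have hwx : w = x := by
      simp only [triE, Finset.mem_insert, Finset.mem_singleton, Prod.mk.injEq] at hw
      rcases hw with ⟨-, h⟩ | ⟨h, -⟩ | ⟨h, -⟩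
      · exact h
      · exact absurd h (by decide)
      · exact absurd h (by decide)
    rw [hwx]
    exact hg x y z
  · refine Or.inl ⟨1, g, ?_⟩
    intro e he w hw
    obtain ⟨x, y, z, rfl⟩ := triE_decode he
    have hwy : w = y := by
      simp only [triE, Finset.mem_insert, Finset.mem_singleton, Prod.mk.injEq] at hw
      rcases hw with ⟨h, -⟩ | ⟨-, h⟩ | ⟨h, -⟩
      · exact absurd h (by decide)
      · exact h
      · exact absurd h (by decide)
    rw [hwy]
    exact hg x y z
  · refine Or.inl ⟨2, g, ?_⟩
    intro e he w hw
    obtain ⟨x, y, z, rfl⟩ := triE_decode he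
    have hwz : w = z := by
      simp only [triE, Finset.mem_insert, Finset.mem_singleton, Prod.mk.injEq] at hw
      rcases hw with ⟨h, -⟩ | ⟨h, -⟩ | ⟨-, h⟩
      · exact absurd h (by decide)
      · exact absurd h (by decide)
      · exact h
    rw [hwz]
    exact hg x y z
  · refine Or.inr ⟨σ, ?_, ?_, Q, hdis, hcov, ?_, ?_⟩
    · rw [hcol]
      exact hinj
    · intro e he
      obtain ⟨x, y, z, rfl⟩ := triE_decode he
      exact hmem x y z
    · intro i hi e he hall
      obtain ⟨x, y, z, rfl⟩ := triE_decode he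
      have hx : x ∈ Q 0 i := hall ((0 : Fin 3), x) (by simp [triE])
      have hy : y ∈ Q 1 i := hall ((1 : Fin 3), y) (by simp [triE])
      have hz : z ∈ Q 2 i := hall ((2 : Fin 3), z) (by simp [triE])
      exact hin i hi x y z hx hy hz
    · intro e he hno
      obtain ⟨x, y, z, rfl⟩ := triE_decode he
      apply hout x y z
      intro i hi hcon
      apply hno i hi
      intro p hp
      simp only [triE, Finset.mem_insert, Finset.mem_singleton] at hp
      rcases hp with rfl | rfl | rfl
      · exact hcon.1
      · exact hcon.2.1
      · exact hcon.2.2
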